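/- Let X be a space which is the union of an increasing ω₁-chain ⟨H_α : α < ω₁⟩ of open subsets, each contained in a Lindelöf subset of X, and suppose X is countably compact. Then for every continuous map f : X → Y with Y metrizable, there exists α < ω₁ such that f(X − H_β) = f(X − H_α) for all β ≥ α. -/

import Mathlib

/-- A subset `s` is countably compact if every countable open cover of `s`
has a finite subcover. -/
def CountablyCompactSet {X : Type*} [TopologicalSpace X] (s : Set X) : Prop :=
  ∀ U : ℕ → Set X, (∀ n, IsOpen (U n)) → s ⊆ ⋃ n, U n →
    ∃ t : Finset ℕ, s ⊆ ⋃ n ∈ t, U n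

open Set Filter Topology TopologicalSpace

/-- A closed set in a countably compact space is countably compact. -/
lemma ccs_of_isClosed {X : Type*} [TopologicalSpace X]
    (hcc : CountablyCompactSet (Set.univ : Set X)) {C : Set X} (hC : IsClosed C) :
    CountablyCompactSet C := by
  intro U hU hcov
  set V : ℕ → Set X := fun n => if n = 0 then Cᶜ else U (n - 1) with hV
  have hVopen : ∀ n, IsOpen (V n) := by
    intro n
    by_cases h : n = 0 <;> simp [hV, h, hC.isOpen_compl, hU]
  have hVcov : (Set.univ : Set X) ⊆ ⋃ n, V n := by
    intro x _
    by_cases hx : x ∈ C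
    · obtain ⟨_, ⟨k, rfl⟩, hk⟩ := hcov hx
      exact Set.mem_iUnion.2 ⟨k + 1, by simpa [hV] using hk⟩
    · exact Set.mem_iUnion.2 ⟨0, by simpa [hV] using hx⟩
  obtain ⟨t, ht⟩ := hcc V hVopen hVcov
  refine ⟨t.image (· - 1), fun x hx => ?_⟩
  obtain ⟨n, hn, hxn⟩ := Set.mem_iUnion₂.1 (ht (Set.mem_univ x))
  have hn0 : n ≠ 0 := by
    rintro rfl
    simp [hV] at hxn
    exact hxn hx
  refine Set.mem_iUnion₂.2 ⟨n - 1, Finset.mem_image_of_mem _ hn, ?_⟩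
  simpa [hV, hn0] using hxn

/-- The continuous image of a countably compact set is countably compact. -/
lemma ccs_image {X Y : Type*} [TopologicalSpace X] [TopologicalSpace Y] {s : Set X}
    (hs : CountablyCompactSet s) {f : X → Y} (hf : Continuous f) :
    CountablyCompactSet (f '' s) := by
  intro U hU hcov
  obtain ⟨t, ht⟩ := hs (fun n => f ⁻¹' U n) (fun n => (hU n).preimage hf)
    (fun x hx => by
      obtain ⟨_, ⟨k, rfl⟩, hk⟩ := hcov ⟨x, hx, rfl⟩
      exact Set.mem_iUnion.2 ⟨k, hk⟩)
  refine ⟨t, ?_⟩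
  rintro y ⟨x, hx, rfl⟩
  obtain ⟨n, hn, hxn⟩ := Set.mem_iUnion₂.1 (ht hx)
  exact Set.mem_iUnion₂.2 ⟨n, hn, hxn⟩

/-- A countably compact set in a metric space is sequentially compact. -/
lemma ccs_isSeqCompact {Y : Type*} [MetricSpace Y] {s : Set Y}
    (hs : CountablyCompactSet s) : IsSeqCompact s := by
  intro x hx
  -- find a cluster point of `x` in `s`
  have hcl : ∃ a ∈ s, ∀ n, a ∈ closure (x '' Set.Ici n) := by
    by_contra h
    push_neg at h
    have hcov : s ⊆ ⋃ n, (closure (x '' Set.Ici n))ᶜ := by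
      intro y hy
      obtain ⟨n, hn⟩ := h y hy
      exact Set.mem_iUnion.2 ⟨n, hn⟩
    obtain ⟨t, ht⟩ := hs _ (fun n => isClosed_closure.isOpen_compl) hcov
    by_cases hte : t.Nonempty
    · set N := t.max' hte
      obtain ⟨n, hn, hxn⟩ := Set.mem_iUnion₂.1 (ht (hx N))
      exact hxn (subset_closure ⟨N, Finset.le_max' t n hn, rfl⟩)
    · obtain ⟨n, hn, _⟩ := Set.mem_iUnion₂.1 (ht (hx 0))
      exact hte ⟨n, hn⟩
  obtain ⟨a, ha, hacl⟩ := hcl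
  have hmcp : MapClusterPt a atTop x := by
    rw [mapClusterPt_iff_frequently]
    intro U hU
    rw [Filter.frequently_atTop]
    intro n
    obtain ⟨y, hyU, k, hk, rfl⟩ := mem_closure_iff_nhds.1 (hacl n) U hU
    exact ⟨k, hk, hyU⟩
  obtain ⟨φ, hφ, hlim⟩ := TopologicalSpace.FirstCountableTopology.tendsto_subseq hmcp
  exact ⟨a, ha, φ, hφ, hlim⟩

lemma ccs_isCompact {Y : Type*} [MetricSpace Y] {s : Set Y}
    (hs : CountablyCompactSet s) : IsCompact s :=
  (ccs_isSeqCompact hs).isCompact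

/-- Any countable family in ω₁ has an upper bound. -/
lemma omega1_upper (g : ℕ → {o : Ordinal // o < (Cardinal.aleph 1).ord}) :
    ∃ γ, ∀ n, g n ≤ γ := by
  have hlt : (⨆ n, (g n).val) < (Cardinal.aleph 1).ord := by
    refine Cardinal.iSup_lt_ord_lift_of_isRegular Cardinal.isRegular_aleph_one
      ?_ (fun n => (g n).2)
    simpa using Cardinal.aleph0_lt_aleph_one
  exact ⟨⟨_, hlt⟩, fun n => Ordinal.le_iSup (fun n => (g n).val) n⟩

/-- A monotone ω₁-indexed family of subsets of a countable set stabilizes. -/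
lemma omega1_stab {P : Type*} {A : Set P} (hA : A.Countable)
    (T : {o : Ordinal // o < (Cardinal.aleph 1).ord} → Set P)
    (hmono : ∀ α β, α ≤ β → T α ⊆ T β) (hTA : ∀ α, T α ⊆ A) :
    ∃ γ, ∀ β, γ ≤ β → T β = T γ := by
  classical
  have hI : ∃ i : {o : Ordinal // o < (Cardinal.aleph 1).ord}, True :=
    ⟨⟨0, Cardinal.isRegular_aleph_one.ord_pos⟩, trivial⟩
  obtain ⟨i0, -⟩ := hI
  set B : Set P := ⋃ α, T α with hB
  by_cases hBe : B.Nonempty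
  · obtain ⟨e, he⟩ := Set.Countable.exists_eq_range
      (Set.Countable.mono (Set.iUnion_subset hTA) hA) hBe
    have hc : ∀ n : ℕ, ∃ α, e n ∈ T α := by
      intro n
      have hn : e n ∈ B := by rw [hB, he]; exact Set.mem_range_self n
      exact Set.mem_iUnion.1 hn
    choose c hcmem using hc
    obtain ⟨γ, hγ⟩ := omega1_upper c
    have hBsub : B ⊆ T γ := by
      intro p hp
      rw [hB, he] at hp
      obtain ⟨n, rfl⟩ := hp
      exact hmono _ _ (hγ n) (hcmem n)
    exact ⟨γ, fun β hβ => subset_antisymm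
      ((Set.subset_iUnion T β).trans hBsub) (hmono _ _ hβ)⟩
  · refine ⟨i0, fun β _ => ?_⟩
    have h1 : T β ⊆ B := Set.subset_iUnion T β
    have h2 : T i0 ⊆ B := Set.subset_iUnion T i0
    rw [Set.not_nonempty_iff_eq_empty] at hBe
    rw [hBe] at h1 h2
    exact subset_antisymm (h1.trans (Set.empty_subset _)) (h2.trans (Set.empty_subset _))

/-- If a countably compact space `X` is the union of a strictly increasing
ω₁-chain of open sets, each contained in a Lindelöf set, then for any continuous
map `f` to a metrizable space the images of the complements stabilize. -/
theorem complements_images_stabilize {X Y : Type*} [TopologicalSpace X]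
    [TopologicalSpace Y] [TopologicalSpace.MetrizableSpace Y]
    (H : {o : Ordinal // o < (Cardinal.aleph 1).ord} → Set X)
    (hopen : ∀ α, IsOpen (H α))
    (hmono : ∀ α β, α ≤ β → H α ⊆ H β)
    (hstrict : ∀ α β, α < β → H α ≠ H β)
    (hLind : ∀ α, ∃ L : Set X, IsLindelof L ∧ H α ⊆ L)
    (hcov : (⋃ α, H α) = Set.univ)
    (hcc : CountablyCompactSet (Set.univ : Set X))
    (f : X → Y) (hf : Continuous f) :
    ∃ α, ∀ β, α ≤ β → f '' (H β)ᶜ = f '' (H α)ᶜ := by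
  classical
  letI : MetricSpace Y := TopologicalSpace.metrizableSpaceMetric Y
  -- the images of complements are compact
  set K : {o : Ordinal // o < (Cardinal.aleph 1).ord} → Set Y :=
    fun α => f '' (H α)ᶜ with hK
  have hKcompact : ∀ α, IsCompact (K α) := fun α =>
    ccs_isCompact (ccs_image (ccs_of_isClosed hcc (hopen α).isClosed_compl) hf)
  have hKanti : ∀ α β, α ≤ β → K β ⊆ K α := fun α β h =>
    Set.image_mono (Set.compl_subset_compl.2 (hmono α β h))
  -- the whole image is compact
  have hS : IsCompact (f '' Set.univ) := ccs_isCompact (ccs_image hcc hf)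
  have hKS : ∀ α, K α ⊆ f '' Set.univ := fun α =>
    Set.image_mono (Set.subset_univ _)
  -- move to the subtype of the image, which is second countable
  set S := f '' Set.univ
  haveI : CompactSpace S := isCompact_iff_compactSpace.1 hS
  haveI : SecondCountableTopology S := inferInstance
  set B := TopologicalSpace.countableBasis S with hBdef
  have hBbasis : TopologicalSpace.IsTopologicalBasis B :=
    TopologicalSpace.isBasis_countableBasis S
  have hBcount : B.Countable := TopologicalSpace.countable_countableBasis S
  -- open sets in the subtype
  set U : {o : Ordinal // o < (Cardinal.aleph 1).ord} → Set S :=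
    fun α => (Subtype.val ⁻¹' K α)ᶜ with hU
  have hUopen : ∀ α, IsOpen (U α) := fun α =>
    (((hKcompact α).isClosed).preimage continuous_subtype_val).isOpen_compl
  have hUmono : ∀ α β, α ≤ β → U α ⊆ U β := fun α β h =>
    Set.compl_subset_compl.2 (Set.preimage_mono (hKanti α β h))
  -- the trace on the basis
  set T : {o : Ordinal // o < (Cardinal.aleph 1).ord} → Set (Set S) :=
    fun α => {b ∈ B | b ⊆ U α} with hT
  obtain ⟨γ, hγ⟩ := omega1_stab hBcount T
    (fun α β h b hb => ⟨hb.1, hb.2.trans (hUmono α β h)⟩)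
    (fun α b hb => hb.1)
  refine ⟨γ, fun β hβ => ?_⟩
  apply subset_antisymm (hKanti γ β hβ)
  intro y hy
  by_contra hyβ
  have hyS : y ∈ S := hKS γ hy
  set z : S := ⟨y, hyS⟩ with hz
  have hzU : z ∈ U β := fun h => hyβ h
  obtain ⟨b, hbB, hzb, hbU⟩ := hBbasis.exists_subset_of_mem_open hzU (hUopen β)
  have hbT : b ∈ T β := ⟨hbB, hbU⟩
  rw [hγ β hβ] at hbT
  exact hbT.2 hzb hy
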